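/- Every abelian subgroup of a finite group satisfying the CP₃ condition is a p-group for some prime p. -/

import Mathlib

-- Auxiliary: in a CP₃ group, no element's order splits as a product of two
-- coprime factors both > 1.
lemma cp3_no_coprime_split {G : Type*} [Group G] [Fintype G]
    (h : ∀ a b : G, orderOf (a * b) < orderOf a + orderOf b)
    (g : G) (m k : ℕ) (hco : Nat.Coprime m k) (hmk : orderOf g = m * k) :
    m = 1 ∨ k = 1 := by
  by_contra hcon
  push_neg at hcon
  obtain ⟨hm1, hk1⟩ := hcon
  have hpos : 0 < orderOf g := orderOf_pos g
  have hm0 : 0 < m := by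
    rcases Nat.eq_zero_or_pos m with hm | hm
    · rw [hm] at hmk; simp only [zero_mul, mul_zero] at hmk; omega
    · exact hm
  have hk0 : 0 < k := by
    rcases Nat.eq_zero_or_pos k with hk | hk
    · rw [hk] at hmk; simp only [zero_mul, mul_zero] at hmk; omega
    · exact hk
  have hm2 : 2 ≤ m := by omega
  have hk2 : 2 ≤ k := by omega
  obtain ⟨x, hx1, hx0⟩ := Nat.chineseRemainder hco 1 0
  obtain ⟨y, hy0, hy1⟩ := Nat.chineseRemainder hco 0 1
  -- gcd facts
  have hcmx : Nat.Coprime m x := by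
    have := Nat.ModEq.gcd_eq hx1  -- gcd x m = gcd 1 m
    simpa [Nat.Coprime, Nat.gcd_comm] using this
  have hckx : k ∣ x := (Nat.modEq_zero_iff_dvd).mp hx0
  have hcky : Nat.Coprime k y := by
    have := Nat.ModEq.gcd_eq hy1
    simpa [Nat.Coprime, Nat.gcd_comm] using this
  have hcmy : m ∣ y := (Nat.modEq_zero_iff_dvd).mp hy0
  have hgx : Nat.gcd (m * k) x = k := by
    rw [hcmx.gcd_mul_left_cancel k, Nat.gcd_eq_left hckx]
  have hgy : Nat.gcd (m * k) y = m := by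
    rw [Nat.mul_comm, hcky.gcd_mul_left_cancel m, Nat.gcd_eq_left hcmy]
  have hoa : orderOf (g ^ x) = m := by
    rw [orderOf_pow, hmk, hgx, Nat.mul_div_cancel _ hk0]
  have hob : orderOf (g ^ y) = k := by
    rw [orderOf_pow, hmk, hgy, Nat.mul_comm, Nat.mul_div_cancel _ hm0]
  have hab : g ^ x * g ^ y = g := by
    rw [← pow_add]
    have hmod : x + y ≡ 1 [MOD m * k] := by
      rw [← Nat.modEq_and_modEq_iff_modEq_mul hco]
      constructor
      · simpa using hx1.add hy0
      · simpa using hx0.add hy1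
    calc g ^ (x + y) = g ^ 1 := by
          rw [pow_eq_pow_iff_modEq, hmk]; exact hmod
      _ = g := pow_one g
  have := h (g ^ x) (g ^ y)
  rw [hab, hoa, hob, hmk] at this
  have := Nat.add_le_mul hm2 hk2
  omega

-- Every element of a CP₃ group has prime-power order.
lemma cp3_orderOf_eq_pow {G : Type*} [Group G] [Fintype G]
    (h : ∀ a b : G, orderOf (a * b) < orderOf a + orderOf b)
    (g : G) {q : ℕ} (hq : q.Prime) (hdvd : q ∣ orderOf g) :
    ∃ n, 0 < n ∧ orderOf g = q ^ n := by
  have hpos : orderOf g ≠ 0 := (orderOf_pos g).ne'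
  have hco : Nat.Coprime (q ^ (orderOf g).factorization q) (ordCompl[q] (orderOf g)) :=
    Nat.Coprime.pow_left _ (Nat.coprime_ordCompl hq hpos)
  have hmk : orderOf g = q ^ (orderOf g).factorization q * ordCompl[q] (orderOf g) :=
    (Nat.ordProj_mul_ordCompl_eq_self _ _).symm
  have hfpos : 0 < (orderOf g).factorization q :=
    Nat.Prime.factorization_pos_of_dvd hq hpos hdvd
  rcases cp3_no_coprime_split h g _ _ hco hmk with h1 | h1
  · exfalso
    have := Nat.one_lt_pow hfpos.ne' hq.one_lt
    omega
  · rw [h1, Nat.mul_one] at hmk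
    exact ⟨_, hfpos, hmk⟩

theorem stmt_14 (G : Type*) [Group G] [Fintype G]
    (h : ∀ a b : G, orderOf (a * b) < orderOf a + orderOf b)
    (H : Subgroup G) (hH : ∀ a b : H, a * b = b * a) :
    ∃ p : ℕ, p.Prime ∧ IsPGroup p H := by
  by_cases htriv : ∀ g : H, g = 1
  · exact ⟨2, Nat.prime_two, fun g => ⟨0, by rw [htriv g]; simp⟩⟩
  · push_neg at htriv
    obtain ⟨g₀, hg₀⟩ := htriv
    set p := (orderOf g₀).minFac with hp
    have hord₀ : orderOf g₀ ≠ 1 := by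
      simpa [orderOf_eq_one_iff] using hg₀
    have hpp : p.Prime := Nat.minFac_prime hord₀
    haveI : Fact p.Prime := ⟨hpp⟩
    refine ⟨p, hpp, IsPGroup.iff_orderOf.mpr fun g => ?_⟩
    by_cases hg : orderOf g = 1
    · exact ⟨0, by simpa using hg⟩
    · set q := (orderOf g).minFac with hq
      have hqp : q.Prime := Nat.minFac_prime hg
      -- orders in G
      have ho₀ : orderOf (g₀ : G) = orderOf g₀ := Subgroup.orderOf_coe g₀
      have hog : orderOf (g : G) = orderOf g := Subgroup.orderOf_coe g
      have hpdvd : p ∣ orderOf (g₀ : G) := ho₀ ▸ Nat.minFac_dvd _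
      have hqdvd : q ∣ orderOf (g : G) := hog ▸ Nat.minFac_dvd _
      obtain ⟨i, hi0, h₀pow⟩ := cp3_orderOf_eq_pow h (g₀ : G) hpp hpdvd
      obtain ⟨j, hj0, hgpow⟩ := cp3_orderOf_eq_pow h (g : G) hqp hqdvd
      by_cases hpq : q = p
      · exact ⟨j, by rw [← hog, hgpow, hpq]⟩
      · exfalso
        have hcomm : Commute (g₀ : G) (g : G) := by
          have := congrArg Subtype.val (hH g₀ g)
          simpa [Commute, SemiconjBy] using this
        have hco : Nat.Coprime (orderOf (g₀ : G)) (orderOf (g : G)) := by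
          rw [h₀pow, hgpow]
          exact Nat.Coprime.pow _ _ ((Nat.coprime_primes hpp hqp).mpr (fun e => hpq e.symm))
        have hmul := hcomm.orderOf_mul_eq_mul_orderOf_of_coprime hco
        have hlt := h (g₀ : G) (g : G)
        rw [hmul] at hlt
        have h2a : 2 ≤ orderOf (g₀ : G) := by
          have := orderOf_pos (g₀ : G)
          have : orderOf (g₀ : G) ≠ 1 := by rw [ho₀]; exact hord₀
          omega
        have h2b : 2 ≤ orderOf (g : G) := by
          have := orderOf_pos (g : G)
          have : orderOf (g : G) ≠ 1 := by rw [hog]; exact hg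
          omega
        have := Nat.add_le_mul h2a h2b
        omega
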